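/- Let d ≥ 1, m = 2d, and r, t ∈ ℂ satisfy the unitarity constraints |r|² + (m−1)|t|² = 1 and (m−2)|t|² + conj(r)·t + r·conj(t) = 0. Define R(n) = Σ_{a∈(Fin m)^n} |Ξ(a)|² · ⟨e(a_1)+⋯+e(a_n), e(a_n)⟩ and K = |(r−t)/√m + √m·t|². Then K ≠ 0 and for every n ≥ 1, R(n+1) = (|r|² − |t|²)·R(n) + 1/K. -/

import Mathlib

noncomputable section

open scoped BigOperators ComplexConjugate RealInnerProductSpace

/-- `Ξ(a_1, …, a_n) = ∏_{j=1}^{n-1} (t + (r - t) δ_{a_j, a_{j+1}})` (empty product is 1). -/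
def Xi (m n : ℕ) (r t : ℂ) (a : Fin n → Fin m) : ℂ :=
  ∏ j : Fin n, if h : (j : ℕ) + 1 < n then
    (t + (r - t) * (if a j = a ⟨(j : ℕ) + 1, h⟩ then 1 else 0)) else 1

/-- The `2d` signed standard basis vectors of `ℝ^d`: `e(2k) = u_k`, `e(2k+1) = -u_k`. -/
def eR (d : ℕ) (a : Fin (2 * d)) : EuclideanSpace ℝ (Fin d) :=
  EuclideanSpace.single ⟨(a : ℕ) / 2, by have := a.2; omega⟩
    (if (a : ℕ) % 2 = 0 then 1 else -1)

/-- The normalization constant `K = |(r-t)/√m + √m t|²` with `m = 2d`. -/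
def K (d : ℕ) (r t : ℂ) : ℝ :=
  ‖(r - t) / (Real.sqrt (2 * d) : ℂ) + (Real.sqrt (2 * d) : ℂ) * t‖ ^ 2

/-- The dispersion `𝒟(n) = K Σ_a ‖e(a_1)+⋯+e(a_n)‖² |Ξ(a)|²` of the phase-averaged
quantum walk with random phase shifts. -/
def Dsp (d : ℕ) (r t : ℂ) (n : ℕ) : ℝ :=
  K d r t * ∑ a : Fin n → Fin (2 * d),
    ‖∑ j : Fin n, eR d (a j)‖ ^ 2 * ‖Xi (2 * d) n r t a‖ ^ 2

/-- The auxiliary sum `R(n) = Σ_a |Ξ(a)|² ⟨e(a_1)+⋯+e(a_n), e(a_n)⟩`. -/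
def Rsum (d : ℕ) (r t : ℂ) (n : ℕ) : ℝ :=
  if hn : 0 < n then
    ∑ a : Fin n → Fin (2 * d), ‖Xi (2 * d) n r t a‖ ^ 2 *
      ⟪(∑ j : Fin n, eR d (a j)), eR d (a ⟨n - 1, by omega⟩)⟫
  else 0

theorem eR_apply (d : ℕ) (a : Fin (2 * d)) (j : Fin d) :
    eR d a j = if (j : ℕ) = (a : ℕ) / 2 then (if (a : ℕ) % 2 = 0 then (1:ℝ) else -1) else 0 := by
  rw [eR, EuclideanSpace.single_apply]
  congr 1
  simp [Fin.ext_iff]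

theorem inner_eR_self (d : ℕ) (a : Fin (2 * d)) : ⟪eR d a, eR d a⟫ = 1 := by
  rw [real_inner_self_eq_norm_sq, eR, EuclideanSpace.norm_single]
  rcases Nat.even_or_odd (a : ℕ) with h | h
  · simp [Nat.even_iff.mp h]
  · simp [Nat.odd_iff.mp h]

theorem eR_add_eR (d : ℕ) (a b : Fin (2 * d)) (h : (b : ℕ) / 2 = (a : ℕ) / 2)
    (hp : (b : ℕ) % 2 ≠ (a : ℕ) % 2) : eR d a + eR d b = 0 := by
  ext j
  simp only [PiLp.add_apply, PiLp.zero_apply, eR_apply, h]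
  have ha : (a:ℕ) % 2 = 0 ∨ (a:ℕ) % 2 = 1 := Nat.mod_two_eq_zero_or_one _
  have hb : (b:ℕ) % 2 = 0 ∨ (b:ℕ) % 2 = 1 := Nat.mod_two_eq_zero_or_one _
  rcases ha with ha | ha <;> rcases hb with hb | hb <;>
    simp [ha, hb] at hp ⊢ <;> split_ifs <;> norm_num

theorem sum_eR_zero (d : ℕ) : ∑ a : Fin (2 * d), eR d a = 0 := by
  apply Finset.sum_ninvolution (f := fun a => eR d a) (s := Finset.univ)
    (g := fun a => (⟨if (a : ℕ) % 2 = 0 then (a : ℕ) + 1 else (a : ℕ) - 1,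
      by have := a.2; split <;> omega⟩ : Fin (2 * d)))
  · intro a
    apply eR_add_eR <;> dsimp only <;> split_ifs <;> omega
  · intro a _ heq
    have := congrArg Fin.val heq
    dsimp only at this
    split_ifs at this <;> omega
  · intro a; exact Finset.mem_univ _
  · intro a
    apply Fin.ext
    dsimp only
    split_ifs <;> omega

theorem norm_factor (r t : ℂ) {α : Type*} [DecidableEq α] (x y : α) :
    ‖t + (r - t) * (if x = y then (1:ℂ) else 0)‖ ^ 2 = if x = y then ‖r‖^2 else ‖t‖^2 := by
  split_ifs with h
  · rw [mul_one]; ring_nf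
  · rw [mul_zero, add_zero]

theorem sum_snoc {M : Type*} [AddCommMonoid M] (m k : ℕ) (f : (Fin (k+2) → Fin m) → M) :
    ∑ a : Fin (k+2) → Fin m, f a = ∑ b : Fin (k+1) → Fin m, ∑ c : Fin m, f (Fin.snoc b c) := by
  rw [← Equiv.sum_comp (Fin.snocEquiv (fun _ => Fin m)) f, Fintype.sum_prod_type,
    Finset.sum_comm]
  rfl

theorem sum_ite_w (m : ℕ) (x : Fin m) (A B : ℝ) :
    ∑ c : Fin m, (if x = c then A else B) = A + ((m:ℝ) - 1) * B := by
  have h : ∀ c : Fin m, (if x = c then A else B) = B + (if x = c then A - B else 0) := by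
    intro c; split <;> ring
  simp_rw [h]
  rw [Finset.sum_add_distrib, Finset.sum_const, Finset.sum_ite_eq, Finset.card_univ]
  simp
  ring
theorem Xi_snoc (m k : ℕ) (r t : ℂ) (b : Fin (k+1) → Fin m) (c : Fin m) :
    Xi m (k+2) r t (Fin.snoc b c) =
      Xi m (k+1) r t b * (t + (r - t) * (if b (Fin.last k) = c then 1 else 0)) := by
  rw [Xi, Xi, Fin.prod_univ_castSucc, Fin.prod_univ_castSucc, Fin.prod_univ_castSucc]
  have hsnoc : ∀ (j : ℕ) (h1 : j < k+2) (h2 : j < k+1),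
      Fin.snoc (α := fun _ => Fin m) b c ⟨j, h1⟩ = b ⟨j, h2⟩ := by
    intro j h1 h2
    have : (⟨j, h1⟩ : Fin (k+2)) = Fin.castSucc ⟨j, h2⟩ := rfl
    rw [this, Fin.snoc_castSucc]
  have hlast : ∀ (h : k+1 < k+2), Fin.snoc (α := fun _ => Fin m) b c ⟨k+1, h⟩ = c := by
    intro h
    have : (⟨k+1, h⟩ : Fin (k+2)) = Fin.last (k+1) := rfl
    rw [this, Fin.snoc_last]
  simp only [Fin.coe_castSucc, Fin.val_last]
  rw [dif_pos (show k+1 < k+2 by omega), dif_neg (show ¬(k+1+1 < k+2) by omega),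
    dif_neg (show ¬(k+1 < k+1) by omega), mul_one, mul_one]
  congr 1
  · apply Finset.prod_congr rfl
    intro j _
    rw [dif_pos (show (j:ℕ)+1 < k+2 by omega), dif_pos (show (j:ℕ)+1 < k+1 by omega),
      Fin.snoc_castSucc]
    exact congrArg (fun v => t + (r - t) * if b j.castSucc = v then (1:ℂ) else 0)
      (hsnoc _ _ (show (j:ℕ)+1 < k+1 by omega))
  · rw [Fin.snoc_castSucc]
    exact congrArg (fun v => t + (r - t) * if b (Fin.last k) = v then (1:ℂ) else 0) (hlast _)

theorem Xi_one (m : ℕ) (r t : ℂ) (a : Fin 1 → Fin m) : Xi m 1 r t a = 1 := by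
  rw [Xi]
  simp

theorem Xi_mass (m : ℕ) (r t : ℂ) (hrt : ‖r‖^2 + ((m:ℝ) - 1) * ‖t‖^2 = 1) :
    ∀ k : ℕ, ∑ a : Fin (k+1) → Fin m, ‖Xi m (k+1) r t a‖^2 = (m:ℝ) := by
  intro k
  induction k with
  | zero =>
      simp [Xi_one]
  | succ k ih =>
      rw [sum_snoc]
      have h : ∀ (b : Fin (k+1) → Fin m) (c : Fin m),
          ‖Xi m (k+2) r t (Fin.snoc b c)‖^2 =
          ‖Xi m (k+1) r t b‖^2 * (if b (Fin.last k) = c then ‖r‖^2 else ‖t‖^2) := by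
        intro b c
        rw [Xi_snoc, norm_mul, mul_pow, norm_factor]
      simp_rw [h, ← Finset.mul_sum, sum_ite_w, hrt, mul_one]
      exact ih

theorem K_eq (d : ℕ) (hd : 1 ≤ d) (r t : ℂ)
    (h1 : ‖r‖ ^ 2 + (((2 * d : ℕ) : ℝ) - 1) * ‖t‖ ^ 2 = 1)
    (h2 : (((2 * d : ℕ) : ℂ) - 2) * ((‖t‖ ^ 2 : ℝ) : ℂ) + conj r * t + r * conj t = 0) :
    K d r t = 1 / (2 * d : ℝ) := by
  have hm : (0:ℝ) < 2 * d := by positivity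
  set s : ℝ := Real.sqrt (2 * d) with hs
  have hs2 : s ^ 2 = 2 * d := Real.sq_sqrt hm.le
  have hspos : 0 < s := Real.sqrt_pos.mpr hm
  have hsne : (s:ℂ) ≠ 0 := by exact_mod_cast hspos.ne'
  -- real part of h2
  have hre : ((2 * d : ℝ) - 2) * ‖t‖ ^ 2 + 2 * (r.re * t.re + r.im * t.im) = 0 := by
    have := congrArg Complex.re h2
    simp only [Complex.add_re, Complex.mul_re, Complex.sub_re, Complex.sub_im,
      Complex.natCast_re, Complex.natCast_im, Complex.ofReal_re, Complex.ofReal_im,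
      Complex.conj_re, Complex.conj_im, Complex.zero_re, Complex.re_ofNat, Complex.im_ofNat,
      Nat.cast_mul, Nat.cast_ofNat] at this
    push_cast at this ⊢
    nlinarith [this]
  have hs2c : (s:ℂ) * (s:ℂ) = 2 * (d:ℂ) := by
    rw [← Complex.ofReal_mul, ← pow_two, hs2]; push_cast; ring
  have hz : (s:ℂ) * ((r - t) / (s:ℂ) + (s:ℂ) * t) = r + (2 * (d:ℂ) - 1) * t := by
    field_simp
    linear_combination t * hs2c
  have hKs : (2 * d : ℝ) * K d r t = ‖r + (2 * (d:ℂ) - 1) * t‖ ^ 2 := by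
    rw [← hz, norm_mul, mul_pow, K]
    congr 1
    rw [eq_comm, Complex.norm_real, Real.norm_eq_abs, abs_of_pos hspos, hs2]
  have hnorm : ‖r + (2 * (d:ℂ) - 1) * t‖ ^ 2 = 1 := by
    rw [Complex.sq_norm, Complex.normSq_apply]
    have h1' : r.re ^ 2 + r.im ^ 2 + ((2 * d : ℝ) - 1) * (t.re ^ 2 + t.im ^ 2) = 1 := by
      have e1 : ‖r‖ ^ 2 = r.re ^ 2 + r.im ^ 2 := by
        rw [Complex.sq_norm, Complex.normSq_apply]; ring
      have e2 : ‖t‖ ^ 2 = t.re ^ 2 + t.im ^ 2 := by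
        rw [Complex.sq_norm, Complex.normSq_apply]; ring
      push_cast at h1
      rw [e1, e2] at h1; linarith
    have hre' : ((2 * d : ℝ) - 2) * (t.re ^ 2 + t.im ^ 2) + 2 * (r.re * t.re + r.im * t.im) = 0 := by
      have e2 : ‖t‖ ^ 2 = t.re ^ 2 + t.im ^ 2 := by
        rw [Complex.sq_norm, Complex.normSq_apply]; ring
      rw [e2] at hre; exact hre
    simp only [Complex.add_re, Complex.add_im, Complex.mul_re, Complex.mul_im,
      Complex.sub_re, Complex.sub_im, Complex.ofReal_re, Complex.ofReal_im,
      Complex.natCast_re, Complex.natCast_im, Complex.re_ofNat, Complex.im_ofNat,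
      Complex.one_re, Complex.one_im]
    nlinarith [h1', hre']
  rw [hnorm] at hKs
  field_simp at hKs ⊢
  linarith

/-- Eq. (54) of the paper: the recursion `R(n+1) = (|r|² - |t|²) R(n) + 1/K` for the
auxiliary correlation sum of the quantum walk with random phase shifts, together with
`K ≠ 0`. -/
theorem Rsum_recursion (d : ℕ) (hd : 1 ≤ d) (r t : ℂ)
    (h1 : ‖r‖ ^ 2 + (((2 * d : ℕ) : ℝ) - 1) * ‖t‖ ^ 2 = 1)
    (h2 : (((2 * d : ℕ) : ℂ) - 2) * ((‖t‖ ^ 2 : ℝ) : ℂ) + conj r * t + r * conj t = 0) :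
    K d r t ≠ 0 ∧
      ∀ n : ℕ, 1 ≤ n →
        Rsum d r t (n + 1) = (‖r‖ ^ 2 - ‖t‖ ^ 2) * Rsum d r t n + 1 / K d r t := by
  have hK : K d r t = 1 / (2 * (d:ℝ)) := K_eq d hd r t h1 h2
  have hdpos : (0:ℝ) < 2 * (d:ℝ) := by positivity
  have hKinv : 1 / K d r t = 2 * (d:ℝ) := by rw [hK, one_div_one_div]
  refine ⟨by rw [hK]; positivity, ?_⟩
  intro n hn
  obtain ⟨k, rfl⟩ : ∃ k, n = k + 1 := ⟨n - 1, by omega⟩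
  rw [Rsum, Rsum, dif_pos (by omega : 0 < k+1+1), dif_pos (by omega : 0 < k+1), hKinv]
  show (∑ a : Fin (k+2) → Fin (2*d), ‖Xi (2*d) (k+2) r t a‖^2 *
        ⟪∑ j : Fin (k+2), eR d (a j), eR d (a (Fin.last (k+1)))⟫)
      = (‖r‖^2 - ‖t‖^2) * ∑ b : Fin (k+1) → Fin (2*d), (‖Xi (2*d) (k+1) r t b‖^2 *
        ⟪∑ j : Fin (k+1), eR d (b j), eR d (b (Fin.last k))⟫) + 2 * (d:ℝ)
  have hw : ∀ (b : Fin (k+1) → Fin (2*d)) (c : Fin (2*d)),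
      ‖Xi (2*d) (k+2) r t (Fin.snoc b c)‖^2 *
        ⟪∑ j : Fin (k+2), eR d (Fin.snoc (α := fun _ => Fin (2*d)) b c j),
          eR d (Fin.snoc (α := fun _ => Fin (2*d)) b c (Fin.last (k+1)))⟫
      = ‖Xi (2*d) (k+1) r t b‖^2 * ((if b (Fin.last k) = c then ‖r‖^2 else ‖t‖^2) *
          (⟪∑ j : Fin (k+1), eR d (b j), eR d c⟫ + 1)) := by
    intro b c
    rw [Xi_snoc, norm_mul, mul_pow, norm_factor, Fin.snoc_last, Fin.sum_univ_castSucc]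
    simp only [Fin.snoc_castSucc, Fin.snoc_last]
    rw [inner_add_left, inner_eR_self]
    ring
  have hc : ∀ b : Fin (k+1) → Fin (2*d),
      (∑ c : Fin (2*d), (if b (Fin.last k) = c then ‖r‖^2 else ‖t‖^2) *
        (⟪∑ j : Fin (k+1), eR d (b j), eR d c⟫ + 1))
      = 1 + (‖r‖^2 - ‖t‖^2) * ⟪∑ j : Fin (k+1), eR d (b j), eR d (b (Fin.last k))⟫ := by
    intro b
    have hexp : ∀ c : Fin (2*d), (if b (Fin.last k) = c then ‖r‖^2 else ‖t‖^2) *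
        (⟪∑ j : Fin (k+1), eR d (b j), eR d c⟫ + 1)
        = ‖t‖^2 * ⟪∑ j : Fin (k+1), eR d (b j), eR d c⟫ + ‖t‖^2 +
          (if b (Fin.last k) = c then
            (‖r‖^2 - ‖t‖^2) * (⟪∑ j : Fin (k+1), eR d (b j), eR d c⟫ + 1) else 0) := by
      intro c; split <;> ring
    simp_rw [hexp]
    rw [Finset.sum_add_distrib, Finset.sum_add_distrib, ← Finset.mul_sum, ← inner_sum,
      sum_eR_zero, inner_zero_right, Finset.sum_const, Finset.card_univ, Finset.sum_ite_eq,
      if_pos (Finset.mem_univ _)]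
    simp only [Fintype.card_fin, mul_zero, zero_add, nsmul_eq_mul]
    linear_combination h1
  rw [sum_snoc]
  simp_rw [hw, ← Finset.mul_sum, hc, mul_add, mul_one, mul_left_comm]
  rw [Finset.sum_add_distrib, ← Finset.mul_sum, Xi_mass (2*d) r t h1 k]
  push_cast
  ring
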